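/- For every N ≥ 2: sSup { Q_AD(MSE_N(ν), PA_N(ν)) : ν an N-node strategy with PA_N(ν) > 0 } = sSup { Q_AD(MSE_2(κ), PA_2(κ)) : κ a 2-node strategy with PA_2(κ) > 0 }. In particular, if ν* is a best response among N-node strategies and κ* is a best response among 2-node strategies, then Q_AD(MSE_N(ν*), PA_N(ν*)) = Q_AD(MSE_2(κ*), PA_2(κ*)): the adversary's optimal utility does not increase with the number of adversarial nodes. -/

import Mathlib

open MeasureTheory ProbabilityTheory

noncomputable section

def midN (N : ℕ) (p : ℝ × (Fin (N-1) → ℝ)) : ℝ :=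
  (max p.1 (⨆ i, p.2 i) + min p.1 (⨅ i, p.2 i)) / 2

def accN (N : ℕ) (η Δ : ℝ) : Set (ℝ × (Fin (N-1) → ℝ)) :=
  {p | max p.1 (⨆ i, p.2 i) - min p.1 (⨅ i, p.2 i) ≤ η * Δ}

def PA_N (N : ℕ) (η Δ : ℝ) (μ : Measure ℝ) (ν : Measure (Fin (N-1) → ℝ)) : ℝ :=
  ((μ.prod ν) (accN N η Δ)).toReal

def MSE_N (N : ℕ) (η Δ : ℝ) (μ : Measure ℝ) (ν : Measure (Fin (N-1) → ℝ)) : ℝ :=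
  ∫ p, (midN N p) ^ 2 ∂((μ.prod ν)[|accN N η Δ])

def mid2 (p : ℝ × ℝ) : ℝ := (max p.1 p.2 + min p.1 p.2) / 2

def acc2 (η Δ : ℝ) : Set (ℝ × ℝ) := {p | max p.1 p.2 - min p.1 p.2 ≤ η * Δ}

def PA_2 (η Δ : ℝ) (μ κ : Measure ℝ) : ℝ := ((μ.prod κ) (acc2 η Δ)).toReal

def MSE_2 (η Δ : ℝ) (μ κ : Measure ℝ) : ℝ :=
  ∫ p, (mid2 p) ^ 2 ∂((μ.prod κ)[|acc2 η Δ])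

def cN (N : ℕ) (η Δ : ℝ) (μ : Measure ℝ) (α : ℝ) : ℝ :=
  sSup {r | ∃ ν : Measure (Fin (N-1) → ℝ), IsProbabilityMeasure ν ∧
    α ≤ PA_N N η Δ μ ν ∧ r = MSE_N N η Δ μ ν}

def c2 (η Δ : ℝ) (μ : Measure ℝ) (α : ℝ) : ℝ :=
  sSup {r | ∃ κ : Measure ℝ, IsProbabilityMeasure κ ∧
    α ≤ PA_2 η Δ μ κ ∧ r = MSE_2 η Δ μ κ}

def IsBestResponseN (N : ℕ) (η Δ : ℝ) (μ : Measure ℝ) (QAD : ℝ → ℝ → ℝ)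
    (ν : Measure (Fin (N-1) → ℝ)) : Prop :=
  IsProbabilityMeasure ν ∧ 0 < PA_N N η Δ μ ν ∧
    ∀ ν' : Measure (Fin (N-1) → ℝ), IsProbabilityMeasure ν' → 0 < PA_N N η Δ μ ν' →
      QAD (MSE_N N η Δ μ ν') (PA_N N η Δ μ ν') ≤ QAD (MSE_N N η Δ μ ν) (PA_N N η Δ μ ν)

def IsBestResponse2 (η Δ : ℝ) (μ : Measure ℝ) (QAD : ℝ → ℝ → ℝ) (κ : Measure ℝ) : Prop :=
  IsProbabilityMeasure κ ∧ 0 < PA_2 η Δ μ κ ∧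
    ∀ κ' : Measure ℝ, IsProbabilityMeasure κ' → 0 < PA_2 η Δ μ κ' →
      QAD (MSE_2 η Δ μ κ') (PA_2 η Δ μ κ') ≤ QAD (MSE_2 η Δ μ κ) (PA_2 η Δ μ κ)

section AuxStmt14

open scoped ENNReal

def tval (η Δ m M : ℝ) : ℝ :=
  if η * Δ < M - m then 2 * (η + 1) * Δ else if 0 ≤ M + m then M else m

lemma key {η Δ : ℝ} (hΔ : 0 < Δ) (hη : 2 ≤ η) {m M n : ℝ} (hmM : m ≤ M)
    (hn1 : -Δ ≤ n) (hn2 : n ≤ Δ) :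
    ((max n M - min n m ≤ η * Δ) ↔
      (max n (tval η Δ m M) - min n (tval η Δ m M) ≤ η * Δ)) ∧
    (max n M - min n m ≤ η * Δ →
      ((max n M + min n m) / 2) ^ 2 ≤
        ((max n (tval η Δ m M) + min n (tval η Δ m M)) / 2) ^ 2) := by
  have h2 : 2 * Δ ≤ η * Δ := by nlinarith
  unfold tval
  split_ifs with hfar hsum
  · have hL : ¬ (max n M - min n m ≤ η * Δ) := by
      have h1 := le_max_right n M
      have h2' := min_le_right n m
      push_neg
      linarith
    have ht : n ≤ 2 * (η + 1) * Δ := by nlinarith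
    have hR : ¬ (max n (2 * (η + 1) * Δ) - min n (2 * (η + 1) * Δ) ≤ η * Δ) := by
      rw [max_eq_right ht, min_eq_left ht]
      push_neg
      nlinarith
    exact ⟨iff_of_false hL hR, fun h => absurd h hL⟩
  · -- t = M case, 0 ≤ M + m
    push_neg at hfar
    have hM0 : 0 ≤ M := by linarith
    have hnm : n - m ≤ η * Δ := by nlinarith
    constructor
    · constructor
      · intro h
        have hMn : M - n ≤ η * Δ := by
          have h1 := le_max_right n M
          have h2' := min_le_left n m
          linarith
        rcases max_cases n M with ⟨e1, c1⟩ | ⟨e1, c1⟩ <;>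
          rcases min_cases n M with ⟨e2, c2⟩ | ⟨e2, c2⟩ <;> rw [e1, e2] <;> linarith
      · intro h
        have hMn : M - n ≤ η * Δ := by
          have h1 := le_max_right n M
          have h2' := min_le_left n M
          linarith
        rcases max_cases n M with ⟨e1, c1⟩ | ⟨e1, c1⟩ <;>
          rcases min_cases n m with ⟨e2, c2⟩ | ⟨e2, c2⟩ <;> rw [e1, e2] <;> linarith
    · intro _
      have hsq : (max n M + min n m) ^ 2 ≤ (n + M) ^ 2 := by
        rcases max_cases n M with ⟨e1, c1⟩ | ⟨e1, c1⟩ <;>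
          rcases min_cases n m with ⟨e2, c2⟩ | ⟨e2, c2⟩ <;> rw [e1, e2]
        · nlinarith
        · nlinarith [mul_nonneg (sub_nonneg.2 hmM) (show (0:ℝ) ≤ 2 * n + M + m by linarith)]
        · nlinarith
        · nlinarith [mul_nonneg (sub_nonneg.2 c2.le) (show (0:ℝ) ≤ n + 2 * M + m by linarith)]
      rw [max_add_min]
      nlinarith [hsq]
  · -- t = m case, M + m < 0
    push_neg at hfar hsum
    have hm0 : m ≤ 0 := by linarith
    have hMn : M - n ≤ η * Δ := by nlinarith
    have hmn : m - n ≤ η * Δ := by linarith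
    constructor
    · constructor
      · intro h
        have hnm : n - m ≤ η * Δ := by
          have h1 := le_max_left n M
          have h2' := min_le_right n m
          linarith
        rcases max_cases n m with ⟨e1, c1⟩ | ⟨e1, c1⟩ <;>
          rcases min_cases n m with ⟨e2, c2⟩ | ⟨e2, c2⟩ <;> rw [e1, e2] <;> linarith
      · intro h
        have hnm : n - m ≤ η * Δ := by
          have h1 := le_max_left n m
          have h2' := min_le_right n m
          linarith
        rcases max_cases n M with ⟨e1, c1⟩ | ⟨e1, c1⟩ <;>
          rcases min_cases n m with ⟨e2, c2⟩ | ⟨e2, c2⟩ <;> rw [e1, e2] <;> linarith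
    · intro _
      have hsq : (max n M + min n m) ^ 2 ≤ (n + m) ^ 2 := by
        rcases max_cases n M with ⟨e1, c1⟩ | ⟨e1, c1⟩ <;>
          rcases min_cases n m with ⟨e2, c2⟩ | ⟨e2, c2⟩ <;> rw [e1, e2]
        · nlinarith
        · nlinarith [mul_nonneg (sub_nonneg.2 hmM) (show (0:ℝ) ≤ -(2 * n + m + M) by linarith)]
        · nlinarith [mul_nonneg (show (0:ℝ) ≤ M - n by linarith) (show (0:ℝ) ≤ -(n + M + 2 * m) by linarith)]
      rw [max_add_min]
      nlinarith [hsq]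

def Tmap (N : ℕ) (η Δ : ℝ) (x : Fin (N-1) → ℝ) : ℝ :=
  tval η Δ (⨅ i, x i) (⨆ i, x i)

section Meas

variable {N : ℕ} {η Δ : ℝ}

lemma measurable_S : Measurable (fun x : Fin (N-1) → ℝ => ⨆ i, x i) :=
  Measurable.iSup fun i => measurable_pi_apply i

lemma measurable_I : Measurable (fun x : Fin (N-1) → ℝ => ⨅ i, x i) :=
  Measurable.iInf fun i => measurable_pi_apply i

lemma measurable_Tmap : Measurable (Tmap N η Δ) := by
  unfold Tmap tval
  exact Measurable.ite (measurableSet_lt measurable_const (measurable_S.sub measurable_I))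
    measurable_const
    (Measurable.ite (measurableSet_le measurable_const (measurable_S.add measurable_I))
      measurable_S measurable_I)

lemma measurable_midN : Measurable (midN N) :=
  ((measurable_fst.max (measurable_S.comp measurable_snd)).add
    (measurable_fst.min (measurable_I.comp measurable_snd))).div_const 2

lemma measurableSet_accN : MeasurableSet (accN N η Δ) :=
  measurableSet_le ((measurable_fst.max (measurable_S.comp measurable_snd)).sub
    (measurable_fst.min (measurable_I.comp measurable_snd))) measurable_const

lemma measurable_mid2 : Measurable mid2 :=
  ((measurable_fst.max measurable_snd).add (measurable_fst.min measurable_snd)).div_const 2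

lemma measurableSet_acc2 : MeasurableSet (acc2 η Δ) :=
  measurableSet_le ((measurable_fst.max measurable_snd).sub
    (measurable_fst.min measurable_snd)) measurable_const

lemma ae_fst_mem {α : Type*} [MeasurableSpace α] (μ : Measure ℝ) [IsProbabilityMeasure μ]
    (hμ : μ (Set.Icc (-Δ) Δ) = 1) (ν : Measure α) [IsProbabilityMeasure ν] :
    ∀ᵐ p ∂(μ.prod ν), p.1 ∈ Set.Icc (-Δ) Δ := by
  have hc : μ (Set.Icc (-Δ) Δ)ᶜ = 0 := by
    rw [measure_compl measurableSet_Icc (measure_ne_top _ _), hμ, measure_univ]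
    simp
  rw [ae_iff]
  have he : {p : ℝ × α | ¬ p.1 ∈ Set.Icc (-Δ) Δ} = (Set.Icc (-Δ) Δ)ᶜ ×ˢ Set.univ := by
    ext p
    simp [Set.mem_prod]
  rw [he, Measure.prod_prod, hc, zero_mul]

lemma mid2_sq_bound (hΔ : 0 < Δ) (hη : 2 ≤ η) {q : ℝ × ℝ} (hq : q ∈ acc2 η Δ)
    (h1 : -Δ ≤ q.1) (h2 : q.1 ≤ Δ) : (mid2 q) ^ 2 ≤ ((1 + η) * Δ) ^ 2 := by
  have h0 : 0 ≤ η * Δ := by nlinarith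
  have hq' : max q.1 q.2 - min q.1 q.2 ≤ η * Δ := hq
  have e1 := le_max_left q.1 q.2
  have e2 := min_le_left q.1 q.2
  apply sq_le_sq' <;> unfold mid2 <;> nlinarith

lemma midN_sq_bound (hΔ : 0 < Δ) (hη : 2 ≤ η) {p : ℝ × (Fin (N-1) → ℝ)}
    (hp : p ∈ accN N η Δ) (h1 : -Δ ≤ p.1) (h2 : p.1 ≤ Δ) :
    (midN N p) ^ 2 ≤ ((1 + η) * Δ) ^ 2 := by
  have h0 : 0 ≤ η * Δ := by nlinarith
  have hq' : max p.1 (⨆ i, p.2 i) - min p.1 (⨅ i, p.2 i) ≤ η * Δ := hp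
  have e1 := le_max_left p.1 (⨆ i, p.2 i)
  have e2 := min_le_left p.1 (⨅ i, p.2 i)
  apply sq_le_sq' <;> unfold midN <;> nlinarith

end Meas

section Main

variable {N : ℕ} {η Δ : ℝ}

lemma ciInf_le_ciSup' [Nonempty (Fin (N-1))] (x : Fin (N-1) → ℝ) :
    (⨅ i, x i) ≤ ⨆ i, x i :=
  (ciInf_le (Set.Finite.bddBelow (Set.finite_range x)) (Classical.arbitrary _)).trans
    (le_ciSup (Set.Finite.bddAbove (Set.finite_range x)) (Classical.arbitrary _))

lemma dominating (hN : 2 ≤ N) (hΔ : 0 < Δ) (hη : 2 ≤ η)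
    (μ : Measure ℝ) [IsProbabilityMeasure μ] (hμ : μ (Set.Icc (-Δ) Δ) = 1)
    (ν : Measure (Fin (N-1) → ℝ)) [IsProbabilityMeasure ν] :
    ∃ κ : Measure ℝ, IsProbabilityMeasure κ ∧ PA_2 η Δ μ κ = PA_N N η Δ μ ν ∧
      (0 < PA_N N η Δ μ ν → MSE_N N η Δ μ ν ≤ MSE_2 η Δ μ κ) := by
  haveI hne : Nonempty (Fin (N-1)) := ⟨⟨0, by omega⟩⟩
  have hT : Measurable (Tmap N η Δ) := measurable_Tmap
  set F : ℝ × (Fin (N-1) → ℝ) → ℝ × ℝ := Prod.map id (Tmap N η Δ) with hFdef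
  have hF : Measurable F := measurable_id.prodMap hT
  have hprod : μ.prod (ν.map (Tmap N η Δ)) = (μ.prod ν).map F := by
    have h := Measure.map_prod_map (f := id) (g := Tmap N η Δ) μ ν measurable_id hT
    rwa [Measure.map_id] at h
  have hkey : ∀ p : ℝ × (Fin (N-1) → ℝ), p.1 ∈ Set.Icc (-Δ) Δ →
      ((p ∈ accN N η Δ ↔ F p ∈ acc2 η Δ) ∧
        (p ∈ accN N η Δ → midN N p ^ 2 ≤ mid2 (F p) ^ 2)) := by
    intro p hp
    have h := key hΔ hη (ciInf_le_ciSup' p.2) hp.1 hp.2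
    simp only [accN, acc2, midN, mid2, Set.mem_setOf_eq, hFdef, Prod.map, id_eq, Tmap]
    exact h
  have haeq : F ⁻¹' (acc2 η Δ) =ᵐ[μ.prod ν] (accN N η Δ : Set (ℝ × (Fin (N-1) → ℝ))) := by
    rw [Filter.eventuallyEq_set]
    filter_upwards [ae_fst_mem μ hμ ν] with p hp
    exact ((hkey p hp).1).symm
  have hmeaseq : (μ.prod (ν.map (Tmap N η Δ))) (acc2 η Δ) = (μ.prod ν) (accN N η Δ) := by
    rw [hprod, Measure.map_apply hF measurableSet_acc2, measure_congr haeq]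
  refine ⟨ν.map (Tmap N η Δ), Measure.isProbabilityMeasure_map hT.aemeasurable, ?_, ?_⟩
  · rw [PA_2, PA_N, hmeaseq]
  · intro hpos
    have hcond2 : (μ.prod (ν.map (Tmap N η Δ)))[|acc2 η Δ] =
        ((μ.prod (ν.map (Tmap N η Δ))) (acc2 η Δ))⁻¹ •
          (μ.prod (ν.map (Tmap N η Δ))).restrict (acc2 η Δ) := rfl
    have hcondN : (μ.prod ν)[|accN N η Δ] =
        ((μ.prod ν) (accN N η Δ))⁻¹ • (μ.prod ν).restrict (accN N η Δ) := rfl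
    have hres : (μ.prod (ν.map (Tmap N η Δ))).restrict (acc2 η Δ) =
        ((μ.prod ν).restrict (accN N η Δ)).map F := by
      rw [hprod, Measure.restrict_map hF measurableSet_acc2,
        Measure.restrict_congr_set haeq]
    set ρ : Measure (ℝ × (Fin (N-1) → ℝ)) := (μ.prod ν).restrict (accN N η Δ) with hρ
    haveI : IsFiniteMeasure ρ := by
      rw [hρ]; infer_instance
    have hint2' : ∫ q, mid2 q ^ 2 ∂((μ.prod (ν.map (Tmap N η Δ))).restrict (acc2 η Δ)) =
        ∫ p, mid2 (F p) ^ 2 ∂ρ := by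
      rw [hres]
      exact integral_map hF.aemeasurable
        ((measurable_mid2.pow_const 2).aestronglyMeasurable)
    have haeρ1 : ∀ᵐ p ∂ρ, p ∈ accN N η Δ := ae_restrict_mem measurableSet_accN
    have haeρ2 : ∀ᵐ p ∂ρ, p.1 ∈ Set.Icc (-Δ) Δ := ae_restrict_of_ae (ae_fst_mem μ hμ ν)
    have hIntN : Integrable (fun p => midN N p ^ 2) ρ := by
      refine ⟨(measurable_midN.pow_const 2).aestronglyMeasurable,
        HasFiniteIntegral.of_bounded (C := ((1 + η) * Δ) ^ 2) ?_⟩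
      filter_upwards [haeρ1, haeρ2] with p h1 h2
      rw [Real.norm_eq_abs, abs_of_nonneg (sq_nonneg _)]
      exact midN_sq_bound hΔ hη h1 h2.1 h2.2
    have hInt2 : Integrable (fun p => mid2 (F p) ^ 2) ρ := by
      refine ⟨((measurable_mid2.comp hF).pow_const 2).aestronglyMeasurable,
        HasFiniteIntegral.of_bounded (C := ((1 + η) * Δ) ^ 2) ?_⟩
      filter_upwards [haeρ1, haeρ2] with p h1 h2
      rw [Real.norm_eq_abs, abs_of_nonneg (sq_nonneg _)]
      exact mid2_sq_bound hΔ hη (((hkey p h2).1).mp h1) h2.1 h2.2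
    have hle : ∫ p, midN N p ^ 2 ∂ρ ≤ ∫ p, mid2 (F p) ^ 2 ∂ρ := by
      refine integral_mono_ae hIntN hInt2 ?_
      filter_upwards [haeρ1, haeρ2] with p h1 h2
      exact (hkey p h2).2 h1
    rw [MSE_N, MSE_2, hcond2, hcondN, integral_smul_measure, integral_smul_measure,
      hmeaseq, hint2', smul_eq_mul, smul_eq_mul]
    exact mul_le_mul_of_nonneg_left hle ENNReal.toReal_nonneg

lemma embed (hN : 2 ≤ N) (μ : Measure ℝ) [IsProbabilityMeasure μ]
    (κ : Measure ℝ) [IsProbabilityMeasure κ] :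
    ∃ ν : Measure (Fin (N-1) → ℝ), IsProbabilityMeasure ν ∧
      PA_N N η Δ μ ν = PA_2 η Δ μ κ ∧ MSE_N N η Δ μ ν = MSE_2 η Δ μ κ := by
  haveI hne : Nonempty (Fin (N-1)) := ⟨⟨0, by omega⟩⟩
  set D : ℝ → (Fin (N-1) → ℝ) := fun t _ => t with hD
  have hDm : Measurable D := measurable_pi_lambda _ fun _ => measurable_id
  set F : ℝ × ℝ → ℝ × (Fin (N-1) → ℝ) := Prod.map id D with hFdef
  have hF : Measurable F := measurable_id.prodMap hDm
  have hprod : μ.prod (κ.map D) = (μ.prod κ).map F := by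
    have h := Measure.map_prod_map (f := id) (g := D) μ κ measurable_id hDm
    rwa [Measure.map_id] at h
  have hpre : F ⁻¹' (accN N η Δ) = acc2 η Δ := by
    ext p
    simp only [accN, acc2, Set.mem_preimage, Set.mem_setOf_eq, hFdef, Prod.map, id_eq, hD,
      ciSup_const, ciInf_const]
  have hmid : ∀ p : ℝ × ℝ, midN N (F p) = mid2 p := by
    intro p
    simp only [midN, mid2, hFdef, Prod.map, id_eq, hD, ciSup_const, ciInf_const]
  have hmeaseq : (μ.prod (κ.map D)) (accN N η Δ) = (μ.prod κ) (acc2 η Δ) := by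
    rw [hprod, Measure.map_apply hF measurableSet_accN, hpre]
  refine ⟨κ.map D, Measure.isProbabilityMeasure_map hDm.aemeasurable, ?_, ?_⟩
  · rw [PA_N, PA_2, hmeaseq]
  · have hres : (μ.prod (κ.map D)).restrict (accN N η Δ) =
        ((μ.prod κ).restrict (acc2 η Δ)).map F := by
      rw [hprod, Measure.restrict_map hF measurableSet_accN, hpre]
    have hcondN : (μ.prod (κ.map D))[|accN N η Δ] =
        ((μ.prod (κ.map D)) (accN N η Δ))⁻¹ • (μ.prod (κ.map D)).restrict (accN N η Δ) := rfl
    have hcond2 : (μ.prod κ)[|acc2 η Δ] =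
        ((μ.prod κ) (acc2 η Δ))⁻¹ • (μ.prod κ).restrict (acc2 η Δ) := rfl
    have hI : ∫ p, midN N p ^ 2 ∂(((μ.prod κ).restrict (acc2 η Δ)).map F) =
        ∫ p, mid2 p ^ 2 ∂((μ.prod κ).restrict (acc2 η Δ)) := by
      rw [integral_map hF.aemeasurable ((measurable_midN.pow_const 2).aestronglyMeasurable)]
      exact integral_congr_ae (Filter.Eventually.of_forall fun p => by simp only [hmid])
    rw [MSE_N, MSE_2, hcondN, hcond2, integral_smul_measure, integral_smul_measure,
      hmeaseq, hres, hI]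

lemma PA_2_le_one (μ κ : Measure ℝ) [IsProbabilityMeasure μ] [IsProbabilityMeasure κ] :
    PA_2 η Δ μ κ ≤ 1 := by
  rw [PA_2]
  calc ((μ.prod κ) (acc2 η Δ)).toReal ≤ (1 : ℝ≥0∞).toReal :=
        ENNReal.toReal_mono ENNReal.one_ne_top prob_le_one
    _ = 1 := by simp

lemma MSE_2_le (hΔ : 0 < Δ) (hη : 2 ≤ η) (μ : Measure ℝ) [IsProbabilityMeasure μ]
    (hμ : μ (Set.Icc (-Δ) Δ) = 1) (κ : Measure ℝ) [IsProbabilityMeasure κ]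
    (hpos : 0 < PA_2 η Δ μ κ) : MSE_2 η Δ μ κ ≤ ((1 + η) * Δ) ^ 2 := by
  have hc0 : (μ.prod κ) (acc2 η Δ) ≠ 0 := by
    intro h
    rw [PA_2, h] at hpos
    simp at hpos
  set Q := (μ.prod κ)[|acc2 η Δ] with hQ
  haveI hPco : IsProbabilityMeasure Q := cond_isProbabilityMeasure hc0
  have hQis : Q = ((μ.prod κ) (acc2 η Δ))⁻¹ • (μ.prod κ).restrict (acc2 η Δ) := rfl
  have haeQ1 : ∀ᵐ q ∂Q, q ∈ acc2 η Δ := by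
    rw [hQis]
    exact Measure.ae_smul_measure (ae_restrict_mem measurableSet_acc2) _
  have haeQ2 : ∀ᵐ q ∂Q, q.1 ∈ Set.Icc (-Δ) Δ := by
    rw [hQis]
    exact Measure.ae_smul_measure (ae_restrict_of_ae (ae_fst_mem μ hμ κ)) _
  have hb : ∀ᵐ q ∂Q, mid2 q ^ 2 ≤ ((1 + η) * Δ) ^ 2 := by
    filter_upwards [haeQ1, haeQ2] with q h1 h2
    exact mid2_sq_bound hΔ hη h1 h2.1 h2.2
  have hInt : Integrable (fun q => mid2 q ^ 2) Q :=
    ⟨(measurable_mid2.pow_const 2).aestronglyMeasurable,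
      HasFiniteIntegral.of_bounded (C := ((1 + η) * Δ) ^ 2) (by
        filter_upwards [hb] with q h
        rw [Real.norm_eq_abs, abs_of_nonneg (sq_nonneg _)]
        exact h)⟩
  calc MSE_2 η Δ μ κ = ∫ q, mid2 q ^ 2 ∂Q := rfl
    _ ≤ ∫ _q, ((1 + η) * Δ) ^ 2 ∂Q := integral_mono_ae hInt (integrable_const _) hb
    _ = ((1 + η) * Δ) ^ 2 := by simp

lemma PA_2_dirac (hΔ : 0 < Δ) (hη : 2 ≤ η) (μ : Measure ℝ) [IsProbabilityMeasure μ]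
    (hμ : μ (Set.Icc (-Δ) Δ) = 1) : PA_2 η Δ μ (Measure.dirac 0) = 1 := by
  have hmeas : Measurable (fun x : ℝ => (x, (0:ℝ))) := measurable_id.prodMk measurable_const
  rw [PA_2, Measure.prod_dirac, Measure.map_apply hmeas measurableSet_acc2]
  have hsub : Set.Icc (-Δ) Δ ⊆ (fun x : ℝ => (x, (0:ℝ))) ⁻¹' (acc2 η Δ) := by
    intro n hn
    simp only [Set.mem_preimage, acc2, Set.mem_setOf_eq]
    rcases max_cases n (0:ℝ) with ⟨e1, c1⟩ | ⟨e1, c1⟩ <;>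
      rcases min_cases n (0:ℝ) with ⟨e2, c2⟩ | ⟨e2, c2⟩ <;> rw [e1, e2] <;>
      nlinarith [hn.1, hn.2]
  have h1 : (1 : ℝ≥0∞) ≤ μ ((fun x : ℝ => (x, (0:ℝ))) ⁻¹' (acc2 η Δ)) :=
    hμ ▸ measure_mono hsub
  rw [le_antisymm prob_le_one h1]
  simp

end Main

end AuxStmt14

theorem stmt14 {N : ℕ} (hN : 2 ≤ N) {η Δ : ℝ} (hΔ : 0 < Δ) (hη : 2 ≤ η)
    (μ : Measure ℝ) [IsProbabilityMeasure μ] (hμ : μ (Set.Icc (-Δ) Δ) = 1)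
    (QAD : ℝ → ℝ → ℝ)
    (hQ1 : ∀ y : ℝ, StrictMono fun x => QAD x y) (hQ2 : ∀ x : ℝ, StrictMono (QAD x)) :
    sSup {u : ℝ | ∃ ν : Measure (Fin (N-1) → ℝ), IsProbabilityMeasure ν ∧
        0 < PA_N N η Δ μ ν ∧ u = QAD (MSE_N N η Δ μ ν) (PA_N N η Δ μ ν)} =
      sSup {u : ℝ | ∃ κ : Measure ℝ, IsProbabilityMeasure κ ∧
        0 < PA_2 η Δ μ κ ∧ u = QAD (MSE_2 η Δ μ κ) (PA_2 η Δ μ κ)} ∧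
    ∀ (νs : Measure (Fin (N-1) → ℝ)) (κs : Measure ℝ),
      IsBestResponseN N η Δ μ QAD νs → IsBestResponse2 η Δ μ QAD κs →
      QAD (MSE_N N η Δ μ νs) (PA_N N η Δ μ νs) = QAD (MSE_2 η Δ μ κs) (PA_2 η Δ μ κs) := by
  set SN := {u : ℝ | ∃ ν : Measure (Fin (N-1) → ℝ), IsProbabilityMeasure ν ∧
      0 < PA_N N η Δ μ ν ∧ u = QAD (MSE_N N η Δ μ ν) (PA_N N η Δ μ ν)} with hSN
  set S2 := {u : ℝ | ∃ κ : Measure ℝ, IsProbabilityMeasure κ ∧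
      0 < PA_2 η Δ μ κ ∧ u = QAD (MSE_2 η Δ μ κ) (PA_2 η Δ μ κ)} with hS2
  have h21 : ∀ u ∈ S2, u ∈ SN := by
    rintro u ⟨κ, hκ, hpos, rfl⟩
    haveI := hκ
    obtain ⟨ν, hν, hPA, hMSE⟩ := embed (η := η) (Δ := Δ) hN μ κ
    exact ⟨ν, hν, by rw [hPA]; exact hpos, by rw [hPA, hMSE]⟩
  have h12 : ∀ u ∈ SN, ∃ v ∈ S2, u ≤ v := by
    rintro u ⟨ν, hν, hpos, rfl⟩
    haveI := hν
    obtain ⟨κ, hκ, hPA, hMSE⟩ := dominating hN hΔ hη μ hμ ν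
    refine ⟨QAD (MSE_2 η Δ μ κ) (PA_2 η Δ μ κ), ⟨κ, hκ, by rw [hPA]; exact hpos, rfl⟩, ?_⟩
    calc QAD (MSE_N N η Δ μ ν) (PA_N N η Δ μ ν)
        ≤ QAD (MSE_2 η Δ μ κ) (PA_N N η Δ μ ν) := (hQ1 _).monotone (hMSE hpos)
      _ = QAD (MSE_2 η Δ μ κ) (PA_2 η Δ μ κ) := by rw [hPA]
  have hub : ∀ u ∈ S2, u ≤ QAD (((1 + η) * Δ) ^ 2) 1 := by
    rintro u ⟨κ, hκ, hpos, rfl⟩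
    haveI := hκ
    calc QAD (MSE_2 η Δ μ κ) (PA_2 η Δ μ κ)
        ≤ QAD (((1 + η) * Δ) ^ 2) (PA_2 η Δ μ κ) :=
          (hQ1 _).monotone (MSE_2_le hΔ hη μ hμ κ hpos)
      _ ≤ QAD (((1 + η) * Δ) ^ 2) 1 := (hQ2 _).monotone (PA_2_le_one μ κ)
  have hbdd2 : BddAbove S2 := ⟨_, hub⟩
  have hbddN : BddAbove SN := by
    refine ⟨QAD (((1 + η) * Δ) ^ 2) 1, fun u hu => ?_⟩
    obtain ⟨v, hv, huv⟩ := h12 u hu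
    exact huv.trans (hub v hv)
  have hne2 : S2.Nonempty := by
    refine ⟨QAD (MSE_2 η Δ μ (Measure.dirac 0)) (PA_2 η Δ μ (Measure.dirac 0)),
      Measure.dirac 0, inferInstance, ?_, rfl⟩
    rw [PA_2_dirac hΔ hη μ hμ]
    norm_num
  have hneN : SN.Nonempty := by
    obtain ⟨u, hu⟩ := hne2
    exact ⟨u, h21 u hu⟩
  have hsup : sSup SN = sSup S2 := by
    refine le_antisymm (csSup_le hneN fun u hu => ?_)
      (csSup_le hne2 fun u hu => le_csSup hbddN (h21 u hu))
    obtain ⟨v, hv, huv⟩ := h12 u hu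
    exact huv.trans (le_csSup hbdd2 hv)
  refine ⟨hsup, ?_⟩
  rintro νs κs ⟨hp1, hp2, hpmax⟩ ⟨hq1, hq2, hqmax⟩
  have e1 : QAD (MSE_N N η Δ μ νs) (PA_N N η Δ μ νs) = sSup SN := by
    refine le_antisymm (le_csSup hbddN ⟨νs, hp1, hp2, rfl⟩) (csSup_le hneN ?_)
    rintro u ⟨ν', h1, h2, rfl⟩
    exact hpmax ν' h1 h2
  have e2 : QAD (MSE_2 η Δ μ κs) (PA_2 η Δ μ κs) = sSup S2 := by
    refine le_antisymm (le_csSup hbdd2 ⟨κs, hq1, hq2, rfl⟩) (csSup_le hne2 ?_)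
    rintro u ⟨κ', h1, h2, rfl⟩
    exact hqmax κ' h1 h2
  rw [e1, e2, hsup]
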